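/- Let R be a commutative ring and g₁,…,g_t ∈ R. Let M = (m_{ij}) be an r×s matrix over R with r ≥ s such that: (1) each entry of M is either zero or one of g₁,…,g_t; (2) the i-th nonzero entry of each column (reading down) is g_i; (3) the last nonzero entry of each column is g_t; (4) if m_{ij} = g_q then m_{k,j+1} = g_q for some k > i. Then the ideal I_s(M) generated by the s×s minors of M equals (g₁,…,g_t)^s. -/
import Mathlib


/-- Let `M` be an `r × s` matrix (`r ≥ s`) over a commutative ring
whose column `j` has nonzero entries exactly at the positions `ρ j 0 < ⋯ < ρ j (t-1)`
with values `g 0, …, g (t-1)` (so the `i`-th nonzero entry of each column is `g i`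
and the last one is `g (t-1)`), and such that each occurrence of `g q` in column `j`
is followed by an occurrence of `g q` strictly lower down in column `j+1`.
Then the ideal of `s × s` minors of `M` equals `(g 0, …, g (t-1))^s`. -/
theorem staircase_maximal_minors {R : Type*} [CommRing R] (r s t : ℕ) (hrs : s ≤ r)
    (g : Fin t → R) (M : Matrix (Fin r) (Fin s) R)
    (ρ : Fin s → Fin t → Fin r)
    (hmono : ∀ j, StrictMono (ρ j))
    (hval : ∀ (j : Fin s) (i : Fin t), M (ρ j i) j = g i)
    (hzero : ∀ (j : Fin s) (a : Fin r), (∀ i : Fin t, ρ j i ≠ a) → M a j = 0)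
    (hstep : ∀ (j : Fin s) (hj : (j : ℕ) + 1 < s) (q : Fin t),
      ρ j q < ρ ⟨(j : ℕ) + 1, hj⟩ q) :
    Ideal.span {x : R | ∃ f : Fin s → Fin r,
        Function.Injective f ∧ x = (M.submatrix f id).det}
      = (Ideal.span (Set.range g)) ^ s := by
  classical
  set J : Ideal R := Ideal.span (Set.range g) with hJ
  set I : Ideal R := Ideal.span {x : R | ∃ f : Fin s → Fin r,
        Function.Injective f ∧ x = (M.submatrix f id).det} with hI
  -- every entry of `M` lies in `J`
  have hentry : ∀ (a : Fin r) (j : Fin s), M a j ∈ J := by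
    intro a j
    by_cases h : ∀ i : Fin t, ρ j i ≠ a
    · rw [hzero j a h]; exact J.zero_mem
    · push_neg at h
      obtain ⟨i, hi⟩ := h
      rw [← hi, hval]
      exact Ideal.subset_span ⟨i, rfl⟩
  -- products of elements of an ideal lie in the corresponding power
  have hprodpow : ∀ (F : Finset (Fin s)) (x : Fin s → R), (∀ j, x j ∈ J) →
      (∏ j ∈ F, x j) ∈ J ^ F.card := by
    intro F
    induction F using Finset.induction with
    | empty =>
        intro x hx
        simp [Ideal.one_eq_top]
    | @insert a F ha ih =>
        intro x hx
        rw [Finset.prod_insert ha, Finset.card_insert_of_notMem ha, pow_succ']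
        exact Ideal.mul_mem_mul (hx a) (ih x hx)
  -- easy inclusion
  have h1 : I ≤ J ^ s := by
    rw [hI, Ideal.span_le]
    rintro x ⟨f, hf, rfl⟩
    rw [Matrix.det_apply']
    refine Ideal.sum_mem _ fun σ _ => Ideal.mul_mem_left _ _ ?_
    have := hprodpow Finset.univ (fun j => M (f (σ j)) j) (fun j => hentry _ _)
    simpa using this
  -- comparison of different columns of the staircase
  have hlt : ∀ (j j' : Fin s), j < j' → ∀ x : Fin t, ρ j x < ρ j' x := by
    have key : ∀ (n : ℕ) (hn : n < s) (j : Fin s), (j : ℕ) < n →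
        ∀ x, ρ j x < ρ ⟨n, hn⟩ x := by
      intro n
      induction n with
      | zero => intro hn j hj x; exact absurd hj (Nat.not_lt_zero _)
      | succ n ih =>
          intro hn j hj x
          have hn' : n < s := by omega
          have hstep' := hstep ⟨n, hn'⟩ (by simpa using hn) x
          rcases Nat.lt_or_ge (j : ℕ) n with h | h
          · exact lt_trans (ih hn' j h x) hstep'
          · have hjn : (j : ℕ) = n := by omega
            have : j = ⟨n, hn'⟩ := Fin.ext hjn
            rw [this]; exact hstep'
    intro j j' hjj' x
    have := key (j' : ℕ) j'.isLt j hjj' x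
    simpa using this
  -- the weight function
  set w : Fin t → ℕ := fun x => (s + 1) ^ (t - 1 - (x : ℕ)) with hw
  set φ : (Fin s → Fin t) → ℕ := fun q => ∑ j, w (q j) with hφ
  have hwpos : ∀ x, 0 < w x := fun x => pow_pos (by omega) _
  have hwanti : ∀ x y : Fin t, x ≤ y → w y ≤ w x := by
    intro x y hxy
    exact Nat.pow_le_pow_right (by omega) (by omega)
  have hwanti' : ∀ x y : Fin t, x < y → (s + 1) * w y ≤ w x := by
    intro x y hxy
    have hy := y.isLt
    have hxy' : (x : ℕ) < (y : ℕ) := hxy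
    calc (s + 1) * w y = (s + 1) ^ (t - 1 - (y : ℕ) + 1) := by
          simp only [hw]; rw [mul_comm, ← pow_succ]
      _ ≤ (s + 1) ^ (t - 1 - (x : ℕ)) := Nat.pow_le_pow_right (by omega) (by omega)
      _ = w x := by simp only [hw]
  set C : ℕ := s * (s + 1) ^ t with hC
  -- key lemma: every product of `s` of the `g`'s lies in `I`
  have keymem : ∀ (K : ℕ) (q : Fin s → Fin t), C - φ q ≤ K → (∏ j, g (q j)) ∈ I := by
    intro K
    induction K using Nat.strong_induction_on with
    | _ K IH =>
      intro q hq
      -- sort q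
      set π := Tuple.sort q with hπ
      set q' : Fin s → Fin t := q ∘ π with hq'def
      have hq'mono : Monotone q' := Tuple.monotone_sort q
      have hprodeq : (∏ j, g (q' j)) = ∏ j, g (q j) :=
        Equiv.prod_comp π (fun j => g (q j))
      have hφeq : φ q' = φ q := Equiv.sum_comp π (fun j => w (q j))
      rw [← hprodeq]
      -- the row selection
      set f : Fin s → Fin r := fun j => ρ j (q' j) with hf
      have hfmono : StrictMono f := by
        intro j j' hjj'
        exact lt_of_lt_of_le (hlt j j' hjj' (q' j)) ((hmono j').monotone (hq'mono hjj'.le))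
      have hdet : (M.submatrix f id).det ∈ I :=
        Ideal.subset_span ⟨f, hfmono.injective, rfl⟩
      rw [Matrix.det_apply'] at hdet
      rw [← Finset.add_sum_erase Finset.univ _
        (Finset.mem_univ (1 : Equiv.Perm (Fin s)))] at hdet
      -- the correction terms lie in `I`
      have hsum : (∑ σ ∈ Finset.univ.erase (1 : Equiv.Perm (Fin s)),
          ((Equiv.Perm.sign σ : ℤ) : R) * ∏ j, (M.submatrix f id) (σ j) j) ∈ I := by
        refine Ideal.sum_mem _ fun σ hσ => Ideal.mul_mem_left _ _ ?_
        have hσ1 : σ ≠ 1 := (Finset.mem_erase.mp hσ).1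
        by_cases hz : ∃ j, M (f (σ j)) j = 0
        · obtain ⟨j, hj⟩ := hz
          rw [Finset.prod_eq_zero (Finset.mem_univ j) (by simpa using hj)]
          exact I.zero_mem
        · push_neg at hz
          have hex : ∀ j, ∃ ii : Fin t, ρ j ii = f (σ j) := by
            intro j
            by_contra h
            push_neg at h
            exact hz j (hzero j _ h)
          choose i hi using hex
          have hprod2 : (∏ j, (M.submatrix f id) (σ j) j) = ∏ j, g (i j) := by
            refine Finset.prod_congr rfl fun j _ => ?_
            rw [Matrix.submatrix_apply, id_eq, ← hi j, hval]
          rw [hprod2]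
          have hrel : ∀ j, ρ j (i j) = ρ (σ j) (q' (σ j)) := fun j => hi j
          have hclt : ∀ j : Fin s, σ j < j → i j < q' (σ j) := by
            intro j h
            have : ρ j (i j) < ρ j (q' (σ j)) := by
              rw [hrel j]; exact hlt (σ j) j h (q' (σ j))
            exact (hmono j).lt_iff_lt.mp this
          have hceq : ∀ j : Fin s, σ j = j → i j = q' (σ j) := by
            intro j h
            refine (hmono j).injective ?_
            rw [hrel j, h]
          -- the set of non-fixed points
          set A : Finset (Fin s) := Finset.univ.filter (fun j => σ j ≠ j) with hA
          have hAne : A.Nonempty := by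
            have : ∃ j, σ j ≠ j := by
              by_contra h
              push_neg at h
              exact hσ1 (Equiv.ext h)
            obtain ⟨j, hj⟩ := this
            exact ⟨j, by simp [hA, hj]⟩
          have hσA : ∀ j, j ∈ A → σ j ∈ A := by
            intro j hj
            simp only [hA, Finset.mem_filter, Finset.mem_univ, true_and] at hj ⊢
            intro h
            exact hj (σ.injective h)
          obtain ⟨b, hbA, hbmin⟩ := Finset.exists_min_image A q' hAne
          set A' : Finset (Fin s) := A.filter (fun j => q' j ≤ q' b) with hA'
          have hA'ne : A'.Nonempty := ⟨b, Finset.mem_filter.mpr ⟨hbA, le_rfl⟩⟩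
          set a : Fin s := A'.min' hA'ne with ha
          have haA' : a ∈ A' := A'.min'_mem hA'ne
          have haA : a ∈ A := (Finset.mem_filter.mp haA').1
          have haq : q' a = q' b :=
            le_antisymm (Finset.mem_filter.mp haA').2 (hbmin a haA)
          set j₀ : Fin s := σ.symm a with hj₀
          have hσj₀ : σ j₀ = a := σ.apply_symm_apply a
          have hanej : a ≠ j₀ := by
            intro h
            have hfix : σ a = a := by rw [h, hσj₀]; exact h
            simp only [hA, Finset.mem_filter, Finset.mem_univ, true_and] at haA
            exact haA hfix
          have hj₀A : j₀ ∈ A := by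
            simp only [hA, Finset.mem_filter, Finset.mem_univ, true_and]
            rw [hσj₀]
            exact hanej
          have hσj₀lt : σ j₀ < j₀ := by
            rw [hσj₀]
            rcases lt_or_ge a j₀ with h | h
            · exact h
            · exfalso
              have hj₀a : j₀ < a := lt_of_le_of_ne h fun hh => hanej hh.symm
              have h1 : q' j₀ ≤ q' a := hq'mono hj₀a.le
              have hmem : j₀ ∈ A' := Finset.mem_filter.mpr ⟨hj₀A, by
                rw [← haq]; exact h1⟩
              exact absurd (A'.min'_le j₀ hmem) (not_le.mpr hj₀a)
          have hij₀ : i j₀ < q' a := by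
            have := hclt j₀ hσj₀lt
            rwa [hσj₀] at this
          -- the weight strictly increases
          have hφlt : φ q' < φ i := by
            have hperm : φ q' = ∑ j, w (q' (σ j)) :=
              (Equiv.sum_comp σ (fun j => w (q' j))).symm
            have hsplitq : (∑ j, w (q' (σ j)))
                = (∑ j ∈ A, w (q' (σ j))) + ∑ j ∈ Finset.univ.filter (fun j => ¬ σ j ≠ j), w (q' (σ j)) := by
              rw [hA, Finset.sum_filter_add_sum_filter_not]
            have hspliti : φ i
                = (∑ j ∈ A, w (i j)) + ∑ j ∈ Finset.univ.filter (fun j => ¬ σ j ≠ j), w (i j) := by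
              rw [hφ, hA, Finset.sum_filter_add_sum_filter_not]
            have hfixeq : ∑ j ∈ Finset.univ.filter (fun j => ¬ σ j ≠ j), w (i j)
                = ∑ j ∈ Finset.univ.filter (fun j => ¬ σ j ≠ j), w (q' (σ j)) := by
              refine Finset.sum_congr rfl fun j hj => ?_
              simp only [Finset.mem_filter, not_not] at hj
              rw [hceq j hj.2]
            have hAle : (∑ j ∈ A, w (q' (σ j))) < ∑ j ∈ A, w (i j) := by
              have hub : (∑ j ∈ A, w (q' (σ j))) ≤ A.card * w (q' a) := by
                refine le_trans (Finset.sum_le_card_nsmul A _ (w (q' a)) fun j hj => ?_) (by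
                  simp [smul_eq_mul])
                refine hwanti _ _ ?_
                rw [haq]
                exact hbmin (σ j) (hσA j hj)
              have hcard : A.card ≤ s := by
                have := Finset.card_le_univ A
                simpa using this
              have hlb : w (i j₀) ≤ ∑ j ∈ A, w (i j) :=
                Finset.single_le_sum (f := fun j => w (i j)) (fun j _ => Nat.zero_le _) hj₀A
              have hstep2 : (s + 1) * w (q' a) ≤ w (i j₀) := hwanti' _ _ hij₀
              calc (∑ j ∈ A, w (q' (σ j))) ≤ A.card * w (q' a) := hub
                _ ≤ s * w (q' a) := Nat.mul_le_mul_right _ hcard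
                _ < (s + 1) * w (q' a) := by
                    have hp := hwpos (q' a)
                    calc s * w (q' a) < s * w (q' a) + w (q' a) :=
                          Nat.lt_add_of_pos_right hp
                      _ = (s + 1) * w (q' a) := by ring
                _ ≤ w (i j₀) := hstep2
                _ ≤ ∑ j ∈ A, w (i j) := hlb
            calc φ q' = (∑ j ∈ A, w (q' (σ j)))
                  + ∑ j ∈ Finset.univ.filter (fun j => ¬ σ j ≠ j), w (q' (σ j)) := by
                  rw [hperm, hsplitq]
              _ < (∑ j ∈ A, w (i j))
                  + ∑ j ∈ Finset.univ.filter (fun j => ¬ σ j ≠ j), w (i j) := by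
                  rw [hfixeq]; exact Nat.add_lt_add_right hAle _
              _ = φ i := hspliti.symm
          have hφC : φ q' < C := by
            have hs0 : 0 < s := Nat.lt_of_le_of_lt (Nat.zero_le _) j₀.isLt
            have ht0 : 0 < t := Nat.lt_of_le_of_lt (Nat.zero_le _) (i j₀).isLt
            calc φ q' ≤ ∑ _j : Fin s, (s + 1) ^ (t - 1) := by
                  refine Finset.sum_le_sum fun j _ => ?_
                  simp only [hw]
                  exact Nat.pow_le_pow_right (by omega) (by omega)
              _ = s * (s + 1) ^ (t - 1) := by
                  simp [Finset.sum_const, Finset.card_univ, smul_eq_mul]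
              _ < C := by
                  have hpp : (s + 1) ^ (t - 1) < (s + 1) ^ t :=
                    Nat.pow_lt_pow_right (by omega) (by omega)
                  calc s * (s + 1) ^ (t - 1) < s * (s + 1) ^ t :=
                        (Nat.mul_lt_mul_left hs0).mpr hpp
                    _ = C := by rw [hC]
          have hKlt : C - φ i < K := by
            have h2 : C - φ i < C - φ q' := Nat.sub_lt_sub_left hφC hφlt
            have h3 : C - φ q' ≤ K := by rw [hφeq]; exact hq
            omega
          exact IH (C - φ i) hKlt i le_rfl
      -- extract the main term
      have hterm := I.sub_mem hdet hsum
      rw [add_sub_cancel_right] at hterm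
      have ht1 : ((Equiv.Perm.sign (1 : Equiv.Perm (Fin s)) : ℤ) : R)
          * ∏ j, (M.submatrix f id) ((1 : Equiv.Perm (Fin s)) j) j = ∏ j, g (q' j) := by
        simp only [Equiv.Perm.sign_one, Units.val_one, Int.cast_one, one_mul,
          Equiv.Perm.one_apply, Matrix.submatrix_apply, id_eq]
        exact Finset.prod_congr rfl fun j _ => hval j (q' j)
      rwa [ht1] at hterm
  -- powers of `J` are spanned by products of the `g`'s
  have hpow : ∀ n : ℕ, J ^ n ≤ Ideal.span {x : R | ∃ q : Fin n → Fin t, x = ∏ j, g (q j)} := by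
    intro n
    induction n with
    | zero =>
        have h1 : (1 : R) ∈ Ideal.span {x : R | ∃ q : Fin 0 → Fin t, x = ∏ j, g (q j)} :=
          Ideal.subset_span ⟨Fin.elim0, by simp⟩
        rw [pow_zero, Ideal.one_eq_top]
        exact le_of_eq ((Ideal.eq_top_iff_one _).mpr h1).symm
    | succ n ih =>
        rw [pow_succ']
        refine Ideal.mul_le.mpr fun a ha b hb => ?_
        have hb' : b ∈ Ideal.span {x : R | ∃ q : Fin n → Fin t, x = ∏ j, g (q j)} := ih hb
        clear hb
        rw [hJ] at ha
        induction ha using Submodule.span_induction with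
        | mem u hu =>
            obtain ⟨i0, rfl⟩ := hu
            induction hb' using Submodule.span_induction with
            | mem v hv =>
                obtain ⟨q, rfl⟩ := hv
                refine Ideal.subset_span ⟨Fin.cons i0 q, ?_⟩
                simp [Fin.prod_univ_succ]
            | zero => rw [mul_zero]; exact Submodule.zero_mem _
            | add x y hx hy hx' hy' => rw [mul_add]; exact Submodule.add_mem _ hx' hy'
            | smul c x hx hx' => rw [mul_smul_comm]; exact Submodule.smul_mem _ _ hx'
        | zero => rw [zero_mul]; exact Submodule.zero_mem _
        | add x y hx hy hx' hy' => rw [add_mul]; exact Submodule.add_mem _ hx' hy'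
        | smul c x hx hx' => rw [smul_mul_assoc]; exact Submodule.smul_mem _ _ hx'
  -- hard inclusion
  have h2 : J ^ s ≤ I := by
    refine le_trans (hpow s) ?_
    rw [Ideal.span_le]
    rintro x ⟨q, rfl⟩
    exact keymem (C - φ q) q le_rfl
  exact le_antisymm h1 h2
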